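/- Let G = SU(2) and R = EG ×_G Maps(G, K(ℤ,7)) be the classifying space of pairs. The rationalization R_ℚ has exactly two nonzero homotopy groups: π₄(R_ℚ) ≅ ℚ² and π₇(R_ℚ) ≅ ℚ. -/

import Mathlib

/-!
# Rational homotopy groups of the classifying space of pairs
(Bouwknegt–Evslin–Mathai, Theorem 3.5)

Let `G = SU(2)` and let `R = EG ×_G Maps(G, K(ℤ,7))` be the classifying space of pairs
`(P, H)`.  It fits in a homotopy fibration `K(ℤ,4) × K(ℤ,7) → R → BG`.  The rationalization
`R_ℚ` of the simply connected space `R` satisfies `π_j(R_ℚ) = π_j(R) ⊗ ℚ`, and the claim is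
that `R_ℚ` has exactly two non-zero homotopy groups, `π₄(R_ℚ) ≅ ℚ²` and `π₇(R_ℚ) ≅ ℚ`.

Rationalization and fibrations are not available in Mathlib, so the statement is formalized
against a structure recording the rational homotopy groups of the fiber
`K(ℤ,4) × K(ℤ,7)`, of the total space `R`, and of the base `BG` (with
`BG_ℚ ≃ K(ℤ,4)_ℚ`, so `π₄(BG) ⊗ ℚ ≅ ℚ` and all other rational homotopy groups vanish),
together with the long exact sequence of rational homotopy groups of the fibration. -/
structure RationalHomotopyFibrationR where
  /-- `π_j(R_ℚ) = π_j(R) ⊗ ℚ`, the rational homotopy groups of the total space `R` -/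
  piR : ℕ → Type
  /-- the rational homotopy groups of the base `BG = BSU(2)` -/
  piB : ℕ → Type
  /-- the rational homotopy groups of the fiber `Maps(G,K(ℤ,7)) ≃ K(ℤ,4) × K(ℤ,7)` -/
  piF : ℕ → Type
  [gR : ∀ j, AddCommGroup (piR j)] [gB : ∀ j, AddCommGroup (piB j)]
  [gF : ∀ j, AddCommGroup (piF j)]
  [mR : ∀ j, Module ℚ (piR j)] [mB : ∀ j, Module ℚ (piB j)]
  [mF : ∀ j, Module ℚ (piF j)]
  /-- `π₄(BG) ⊗ ℚ ≅ ℚ`  (since `BSU(2)_ℚ ≃ K(ℤ,4)_ℚ`) -/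
  piB4 : piB 4 ≃ₗ[ℚ] ℚ
  /-- all other rational homotopy groups of `BG` vanish -/
  piB_vanish : ∀ j : ℕ, j ≠ 4 → Subsingleton (piB j)
  /-- `π₄` of the fiber `K(ℤ,4) × K(ℤ,7)` is `ℚ` -/
  piF4 : piF 4 ≃ₗ[ℚ] ℚ
  /-- `π₇` of the fiber `K(ℤ,4) × K(ℤ,7)` is `ℚ` -/
  piF7 : piF 7 ≃ₗ[ℚ] ℚ
  /-- all other rational homotopy groups of the fiber vanish -/
  piF_vanish : ∀ j : ℕ, j ≠ 4 → j ≠ 7 → Subsingleton (piF j)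
  /-- the map `π_j(fiber) → π_j(R)` in the long exact sequence of the fibration -/
  fiberMap : ∀ j, piF j →ₗ[ℚ] piR j
  /-- the map `π_j(R) → π_j(BG)` in the long exact sequence of the fibration -/
  baseMap : ∀ j, piR j →ₗ[ℚ] piB j
  /-- the connecting map `π_{j+1}(BG) → π_j(fiber)` -/
  boundary : ∀ j, piB (j + 1) →ₗ[ℚ] piF j
  /-- exactness of `π_j(F) → π_j(R) → π_j(BG)` -/
  exact_at_R : ∀ j, Function.Exact (fiberMap j) (baseMap j)
  /-- exactness of `π_{j+1}(R) → π_{j+1}(BG) → π_j(F)` -/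
  exact_at_B : ∀ j, Function.Exact (baseMap (j + 1)) (boundary j)
  /-- exactness of `π_{j+1}(BG) → π_j(F) → π_j(R)` -/
  exact_at_F : ∀ j, Function.Exact (boundary j) (fiberMap j)

attribute [instance] RationalHomotopyFibrationR.gR RationalHomotopyFibrationR.gB
  RationalHomotopyFibrationR.gF RationalHomotopyFibrationR.mR
  RationalHomotopyFibrationR.mB RationalHomotopyFibrationR.mF

/-- **The rationalization `R_ℚ` of the classifying space of pairs has exactly two non-zero
homotopy groups: `π₄(R_ℚ) ≅ ℚ²` and `π₇(R_ℚ) ≅ ℚ`** (Bouwknegt–Evslin–Mathai,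
Theorem 3.5). -/
theorem rational_homotopy_of_R (D : RationalHomotopyFibrationR) :
    Nonempty (D.piR 4 ≃ₗ[ℚ] (ℚ × ℚ)) ∧
    Nonempty (D.piR 7 ≃ₗ[ℚ] ℚ) ∧
    ∀ j : ℕ, j ≠ 4 → j ≠ 7 → Subsingleton (D.piR j) := by
  -- fiberMap j is injective whenever π_{j+1}(B) vanishes
  have hinj : ∀ j, Subsingleton (D.piB (j + 1)) → Function.Injective (D.fiberMap j) := by
    intro j hs
    rw [← LinearMap.ker_eq_bot, LinearMap.exact_iff.mp (D.exact_at_F j)]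
    refine le_antisymm ?_ bot_le
    rintro x ⟨y, rfl⟩
    simp [Subsingleton.elim y 0]
  refine ⟨?_, ?_, ?_⟩
  · -- π₄ : short exact sequence 0 → piF 4 → piR 4 → piB 4 → 0, which splits over ℚ
    have hFinj : Function.Injective (D.fiberMap 4) := hinj 4 (D.piB_vanish 5 (by norm_num))
    have hBsurj : Function.Surjective (D.baseMap 4) := by
      intro y
      have h3 : Subsingleton (D.piF 3) := D.piF_vanish 3 (by norm_num) (by norm_num)
      exact (D.exact_at_B 3 y).mp (Subsingleton.elim _ _)
    obtain ⟨g, hg⟩ := (D.baseMap 4).exists_rightInverse_of_surjective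
      (LinearMap.range_eq_top.mpr hBsurj)
    have hgapp : ∀ b, D.baseMap 4 (g b) = b := fun b => DFunLike.congr_fun hg b
    set φ : (D.piF 4 × D.piB 4) →ₗ[ℚ] D.piR 4 := (D.fiberMap 4).coprod g with hφ
    have hbaseF : ∀ a, D.baseMap 4 (D.fiberMap 4 a) = 0 := fun a =>
      (D.exact_at_R 4 (D.fiberMap 4 a)).mpr ⟨a, rfl⟩
    have hφinj : Function.Injective φ := by
      rw [← LinearMap.ker_eq_bot]
      refine le_antisymm ?_ bot_le
      rintro ⟨a, b⟩ hab
      have hab' : D.fiberMap 4 a + g b = 0 := hab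
      have hb : b = 0 := by
        have := congrArg (D.baseMap 4) hab'
        simpa [map_add, hbaseF, hgapp] using this
      subst hb
      have ha : D.fiberMap 4 a = 0 := by simpa using hab'
      have : a = 0 := hFinj (by simpa using ha)
      simp [this, Submodule.mem_bot, Prod.ext_iff]
    have hφsurj : Function.Surjective φ := by
      intro x
      have hx : D.baseMap 4 (x - g (D.baseMap 4 x)) = 0 := by
        simp [map_sub, hgapp]
      obtain ⟨a, ha⟩ := (D.exact_at_R 4 _).mp hx
      refine ⟨⟨a, D.baseMap 4 x⟩, ?_⟩
      show D.fiberMap 4 a + g (D.baseMap 4 x) = x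
      rw [ha]; abel
    exact ⟨((LinearEquiv.ofBijective φ ⟨hφinj, hφsurj⟩).symm.trans
      (D.piF4.prodCongr D.piB4)).trans (LinearEquiv.refl ℚ (ℚ × ℚ))⟩
  · -- π₇ : fiberMap 7 is an isomorphism
    have hFinj : Function.Injective (D.fiberMap 7) := hinj 7 (D.piB_vanish 8 (by norm_num))
    have hFsurj : Function.Surjective (D.fiberMap 7) := by
      intro x
      have h7 : Subsingleton (D.piB 7) := D.piB_vanish 7 (by norm_num)
      exact (D.exact_at_R 7 x).mp (Subsingleton.elim _ _)
    exact ⟨(LinearEquiv.ofBijective (D.fiberMap 7) ⟨hFinj, hFsurj⟩).symm.trans D.piF7⟩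
  · intro j h4 h7
    have hF := D.piF_vanish j h4 h7
    have hB := D.piB_vanish j h4
    refine ⟨fun x y => ?_⟩
    have hz : ∀ z : D.piR j, z = 0 := by
      intro z
      obtain ⟨w, hw⟩ := (D.exact_at_R j z).mp (Subsingleton.elim _ _)
      rw [← hw, Subsingleton.elim w 0, map_zero]
    rw [hz x, hz y]
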